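/- A subset ℛ of 𝒢 is a partial Z-regulus (i.e. satisfies conditions (R1) and (R2)) if, and only if, it satisfies: (⊠1) ℛ is a distant clique with at least three elements, and (⊠2) whenever three mutually distinct elements E₀, E₁, E₂ ∈ ℛ and some W ∈ 𝒢 satisfy W ∼ E₀, W not distant from E₁ and W not distant from E₂, then W is not distant from any E ∈ ℛ. -/

import Mathlib

/-- The Grassmannian `𝒢` of all subspaces `X ≤ V` with `X ≅ V/X`. -/
def Grass (K V : Type*) [DivisionRing K] [AddCommGroup V] [Module K V] :
    Set (Submodule K V) :=
  {X | Nonempty (X ≃ₗ[K] (V ⧸ X))}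

variable {K V : Type*} [DivisionRing K] [AddCommGroup V] [Module K V]

/-- The dimension of the quotient `E / M` (computed as the rank of `E ⧸ (M ∩ E)`). -/
noncomputable def quotRank (M E : Submodule K V) : Cardinal :=
  Module.rank K (E ⧸ (M.comap E.subtype))

/-- Two subspaces are adjacent if `dim (X/(X ⊓ Y)) = dim (Y/(X ⊓ Y)) = 1`. -/
def Adjacent (X Y : Submodule K V) : Prop :=
  quotRank (X ⊓ Y) X = 1 ∧ quotRank (X ⊓ Y) Y = 1

/-- Two subspaces are distant if they are complementary: `X ⊕ Y = V`. -/
def Distant (X Y : Submodule K V) : Prop := IsCompl X Y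

/-- The star `𝒢[M⟩` with centre `M`. -/
def starSet (M : Submodule K V) : Set (Submodule K V) :=
  {E | M ≤ E ∧ quotRank M E = 1}

/-- `M` is the centre of a star, i.e. there is `X ∈ 𝒢` with `M ≤ X`, `dim (X/M) = 1`. -/
def IsStarCentre (M : Submodule K V) : Prop :=
  ∃ X ∈ Grass K V, M ≤ X ∧ quotRank M X = 1

/-- The top `𝒢⟨N]` with carrier `N`. -/
def topSet (N : Submodule K V) : Set (Submodule K V) :=
  {E | E ≤ N ∧ quotRank E N = 1}

/-- `N` is the carrier of a top, i.e. there is `X ∈ 𝒢` with `X ≤ N`, `dim (N/X) = 1`. -/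
def IsTopCarrier (N : Submodule K V) : Prop :=
  ∃ X ∈ Grass K V, X ≤ N ∧ quotRank X N = 1

/-- An adjacency clique: a set of mutually adjacent elements of `𝒢`. -/
def IsAdjClique (A : Set (Submodule K V)) : Prop :=
  A ⊆ Grass K V ∧ A.Pairwise Adjacent

/-- A maximal adjacency clique. -/
def IsMaxAdjClique (A : Set (Submodule K V)) : Prop :=
  IsAdjClique A ∧ ∀ B, IsAdjClique B → A ⊆ B → A = B

/-- The pencil `𝒢[M,N] = {X ∈ 𝒢 | M < X < N}`. -/
def pencilSet (M N : Submodule K V) : Set (Submodule K V) :=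
  {X ∈ Grass K V | M < X ∧ X < N}

/-- `(M, N)` defines a pencil: there is `X ∈ 𝒢` with `M ≤ X ≤ N` and
`dim (X/M) = dim (N/X) = 1`. -/
def IsPencilPair (M N : Submodule K V) : Prop :=
  ∃ X ∈ Grass K V, M ≤ X ∧ X ≤ N ∧ quotRank M X = 1 ∧ quotRank X N = 1

/-- A pencil in `𝒢`. -/
def IsPencil (S : Set (Submodule K V)) : Prop :=
  ∃ M N : Submodule K V, IsPencilPair M N ∧ S = pencilSet M N

/-- A point is a one-dimensional subspace. -/
def IsPoint (p : Submodule K V) : Prop := Module.rank K p = 1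

/-- A line is a two-dimensional subspace. -/
def IsLine (L : Submodule K V) : Prop := Module.rank K L = 2

/-- Two subspaces meet if they have a common point, i.e. nonzero intersection. -/
def Meets (X Y : Submodule K V) : Prop := X ⊓ Y ≠ ⊥

/-- A distant clique: a set of mutually distant elements of `𝒢`. -/
def IsDistantClique (R : Set (Submodule K V)) : Prop :=
  R ⊆ Grass K V ∧ R.Pairwise Distant

/-- A set has at least three elements. -/
def HasThree (R : Set (Submodule K V)) : Prop :=
  ∃ A ∈ R, ∃ B ∈ R, ∃ C ∈ R, A ≠ B ∧ A ≠ C ∧ B ≠ C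

/-- Condition (R2): if a line meets three mutually distinct elements of `R`
then it meets all elements of `R`. -/
def MeetsThreeMeetsAll (R : Set (Submodule K V)) : Prop :=
  ∀ L : Submodule K V, IsLine L →
    ∀ E₀ ∈ R, ∀ E₁ ∈ R, ∀ E₂ ∈ R, E₀ ≠ E₁ → E₀ ≠ E₂ → E₁ ≠ E₂ →
      Meets L E₀ → Meets L E₁ → Meets L E₂ → ∀ E ∈ R, Meets L E

/-- A partial `Z`-regulus: conditions (R1) and (R2). -/
def IsPartialZRegulus (R : Set (Submodule K V)) : Prop :=
  (IsDistantClique R ∧ HasThree R) ∧ MeetsThreeMeetsAll R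

/-- A `Z`-regulus: a partial `Z`-regulus that is maximal, i.e. not properly
contained in any partial `Z`-regulus. -/
def IsZRegulus (R : Set (Submodule K V)) : Prop :=
  IsPartialZRegulus R ∧ ∀ S : Set (Submodule K V), IsPartialZRegulus S → R ⊆ S → R = S

/-- A directrix of `R`: a line meeting all elements of `R`. -/
def IsDirectrix (R : Set (Submodule K V)) (L : Submodule K V) : Prop :=
  IsLine L ∧ ∀ E ∈ R, Meets L E

/-- Condition (⊠2) from Theorem `Zreg`. -/
def BoxTwo (R : Set (Submodule K V)) : Prop :=
  ∀ E₀ ∈ R, ∀ E₁ ∈ R, ∀ E₂ ∈ R, E₀ ≠ E₁ → E₀ ≠ E₂ → E₁ ≠ E₂ →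
    ∀ W ∈ Grass K V, Adjacent W E₀ → ¬ Distant W E₁ → ¬ Distant W E₂ →
      ∀ E ∈ R, ¬ Distant W E

open Submodule in
private lemma rank_span_singleton'' {v : V} (hv : v ≠ 0) :
    Module.rank K (K ∙ v) = 1 := by
  rw [show (K ∙ v) = span K ({v} : Set V) from rfl,
    rank_span_set (LinearIndepOn.singleton (v := id) hv), Cardinal.mk_singleton]

open Submodule in
private lemma quotRank_one_sup {M E : Submodule K V} (hME : M ≤ E) (h1 : quotRank M E = 1)
    {w : V} (hw : w ∈ E) (hwM : w ∉ M) : M ⊔ (K ∙ w) = E := by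
  refine le_antisymm (sup_le hME ((span_singleton_le_iff_mem w E).2 hw)) ?_
  intro v hv
  obtain ⟨v₀, hv₀⟩ := rank_le_one_iff.1 h1.le
  obtain ⟨r₀, hr₀⟩ := hv₀ (Submodule.Quotient.mk ⟨w, hw⟩)
  have hwm : (Submodule.Quotient.mk (⟨w, hw⟩ : E) : E ⧸ M.comap E.subtype) ≠ 0 := by
    simpa [Submodule.Quotient.mk_eq_zero] using hwM
  have hr₀0 : r₀ ≠ 0 := by rintro rfl; rw [zero_smul] at hr₀; exact hwm hr₀.symm
  obtain ⟨r, hr⟩ := hv₀ (Submodule.Quotient.mk ⟨v, hv⟩)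
  have key : (Submodule.Quotient.mk (⟨v, hv⟩ : E) : E ⧸ M.comap E.subtype)
      = Submodule.Quotient.mk ((r * r₀⁻¹) • (⟨w, hw⟩ : E)) := by
    calc (Submodule.Quotient.mk (⟨v, hv⟩ : E) : E ⧸ M.comap E.subtype)
        = r • v₀ := hr.symm
      _ = (r * r₀⁻¹ * r₀) • v₀ := by rw [mul_assoc, inv_mul_cancel₀ hr₀0, mul_one]
      _ = (r * r₀⁻¹) • (r₀ • v₀) := by rw [mul_smul]
      _ = (r * r₀⁻¹) • (Submodule.Quotient.mk (⟨w, hw⟩ : E)) := by rw [hr₀]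
      _ = Submodule.Quotient.mk ((r * r₀⁻¹) • (⟨w, hw⟩ : E)) := rfl
  have hvm : v - (r * r₀⁻¹) • w ∈ M := by
    simpa using (Submodule.Quotient.eq _).1 key
  have hveq : v = (v - (r * r₀⁻¹) • w) + (r * r₀⁻¹) • w := by abel
  rw [hveq]
  exact add_mem (mem_sup_left hvm)
    (mem_sup_right (smul_mem _ _ (mem_span_singleton_self w)))

open Submodule in
private lemma quotRank_one_of_sup {M E : Submodule K V} (hME : M ≤ E) {w : V} (hw : w ∈ E)
    (hwM : w ∉ M) (hsup : M ⊔ (K ∙ w) = E) : quotRank M E = 1 := by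
  have hwm : (Submodule.Quotient.mk (⟨w, hw⟩ : E) : E ⧸ M.comap E.subtype) ≠ 0 := by
    simpa [Submodule.Quotient.mk_eq_zero] using hwM
  refine le_antisymm (rank_le_one_iff.2 ⟨Submodule.Quotient.mk ⟨w, hw⟩, ?_⟩) ?_
  · intro q
    obtain ⟨⟨x, hx⟩, rfl⟩ := Submodule.Quotient.mk_surjective _ q
    have hx' : x ∈ M ⊔ (K ∙ w) := hsup.symm ▸ hx
    obtain ⟨m, hm, y, hy, hmy⟩ := Submodule.mem_sup.1 hx'
    obtain ⟨r, rfl⟩ := Submodule.mem_span_singleton.1 hy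
    refine ⟨r, ?_⟩
    have : r • (⟨w, hw⟩ : E) - ⟨x, hx⟩ ∈ M.comap E.subtype := by
      have h2 : r • w - x ∈ M := by
        have h3 : r • w - (m + r • w) = -m := by abel
        rw [← hmy, h3]; exact M.neg_mem hm
      simpa using h2
    calc r • (Submodule.Quotient.mk (⟨w, hw⟩ : E) : E ⧸ M.comap E.subtype)
        = Submodule.Quotient.mk (r • (⟨w, hw⟩ : E)) := rfl
      _ = Submodule.Quotient.mk ⟨x, hx⟩ := (Submodule.Quotient.eq _).2 this
  · have : Nontrivial (E ⧸ M.comap E.subtype) := ⟨_, 0, hwm⟩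
    exact Cardinal.one_le_iff_pos.2 rank_pos

open Submodule in
private lemma exists_of_quotRank_one {M E : Submodule K V} (h1 : quotRank M E = 1) :
    ∃ w, w ∈ E ∧ w ∉ M := by
  by_contra h
  push_neg at h
  have htop : M.comap E.subtype = ⊤ := by
    rw [eq_top_iff]; intro x _; exact h x x.2
  have : Subsingleton (E ⧸ M.comap E.subtype) :=
    (Submodule.Quotient.subsingleton_iff).2 htop
  have h0 : quotRank M E = 0 := rank_zero_iff.2 this
  rw [h0] at h1
  exact zero_ne_one h1

open Submodule in
private lemma quotRank_bot' (E : Submodule K V) : quotRank ⊥ E = Module.rank K E := by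
  have hbot : (⊥ : Submodule K V).comap E.subtype = ⊥ := by
    rw [comap_bot, ker_subtype]
  unfold quotRank
  rw [hbot]
  exact (Submodule.quotEquivOfEqBot _ rfl).rank_eq

open Submodule in
private lemma exists_relCompl {S E : Submodule K V} (hSE : S ≤ E) :
    ∃ C, C ≤ E ∧ S ⊔ C = E ∧ S ⊓ C = ⊥ := by
  obtain ⟨C', hC'⟩ := Submodule.exists_isCompl (S.comap E.subtype)
  refine ⟨C'.map E.subtype, map_subtype_le _ _, ?_, ?_⟩
  · have h1 : S.comap E.subtype ⊔ C' = ⊤ := hC'.sup_eq_top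
    have h2 := congrArg (Submodule.map E.subtype) h1
    rwa [Submodule.map_sup, Submodule.map_comap_subtype, inf_eq_right.2 hSE,
      Submodule.map_top, range_subtype] at h2
  · have h1 : S.comap E.subtype ⊓ C' = ⊥ := hC'.inf_eq_bot
    have h2 := congrArg (Submodule.map E.subtype) h1
    rwa [Submodule.map_inf _ E.injective_subtype, Submodule.map_comap_subtype,
      inf_eq_right.2 hSE, Submodule.map_bot] at h2

open Submodule in
private lemma exists_hyperplane {E₀ : Submodule K V} {d x : V} (hd : d ∈ E₀) (hx : x ∈ E₀)
    (hxd : x ∉ (K ∙ d)) :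
    ∃ H, H ≤ E₀ ∧ d ∈ H ∧ x ∉ H ∧ H ⊔ (K ∙ x) = E₀ ∧ quotRank H E₀ = 1 := by
  have hdle : (K ∙ d) ≤ E₀ := (span_singleton_le_iff_mem d E₀).2 hd
  have hxle : (K ∙ x) ≤ E₀ := (span_singleton_le_iff_mem x E₀).2 hx
  obtain ⟨C, hCE, hsup, hinf⟩ := exists_relCompl (sup_le hdle hxle)
  have hxH : x ∉ (K ∙ d) ⊔ C := by
    intro hxH
    obtain ⟨a, ha, c, hc, hac⟩ := Submodule.mem_sup.1 hxH
    have hcm : c ∈ ((K ∙ d) ⊔ (K ∙ x)) ⊓ C := by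
      constructor
      · have : c = x - a := by rw [← hac]; abel
        rw [this]
        exact sub_mem (mem_sup_right (mem_span_singleton_self x)) (mem_sup_left ha)
      · exact hc
    rw [hinf] at hcm
    apply hxd
    rw [mem_bot] at hcm
    rw [← hac, hcm, add_zero]; exact ha
  have hHsup : ((K ∙ d) ⊔ C) ⊔ (K ∙ x) = E₀ := by
    rw [sup_assoc, sup_comm C, ← sup_assoc]; exact hsup
  have hHle : (K ∙ d) ⊔ C ≤ E₀ := sup_le hdle hCE
  exact ⟨(K ∙ d) ⊔ C, hHle, mem_sup_left (mem_span_singleton_self d), hxH, hHsup,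
    quotRank_one_of_sup hHle hx hxH hHsup⟩

open Submodule in
private lemma isCompl_of_notMem {E₀ E H : Submodule K V} (hc : IsCompl E₀ E) (hH : H ≤ E₀)
    (h1 : quotRank H E₀ = 1) {w : V} (hw : w ∉ H ⊔ E) : IsCompl (H ⊔ (K ∙ w)) E := by
  obtain ⟨x, hxE₀, hxH⟩ := exists_of_quotRank_one h1
  have hEx : H ⊔ (K ∙ x) = E₀ := quotRank_one_sup hH h1 hxE₀ hxH
  constructor
  · rw [disjoint_iff, eq_bot_iff]
    rintro u ⟨huW, huE⟩
    obtain ⟨h, hh, y, hy, huy⟩ := Submodule.mem_sup.1 huW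
    obtain ⟨a, rfl⟩ := Submodule.mem_span_singleton.1 hy
    by_cases ha : a = 0
    · have : u = h := by rw [← huy, ha, zero_smul, add_zero]
      have hmem : u ∈ E₀ ⊓ E := ⟨this ▸ hH hh, huE⟩
      rwa [hc.inf_eq_bot] at hmem
    · exfalso
      apply hw
      have : w = a⁻¹ • (u - h) := by
        rw [← huy]; rw [show h + a • w - h = a • w by abel, smul_smul, inv_mul_cancel₀ ha,
          one_smul]
      rw [this]
      exact smul_mem _ _ (sub_mem (mem_sup_right huE) (mem_sup_left hh))
  · rw [codisjoint_iff, eq_top_iff]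
    have htop : E₀ ⊔ E = ⊤ := hc.sup_eq_top
    have hwtop : w ∈ (H ⊔ (K ∙ x)) ⊔ E := by rw [hEx, htop]; trivial
    rw [sup_assoc] at hwtop
    obtain ⟨h, hh, z, hz, hwz⟩ := Submodule.mem_sup.1 hwtop
    obtain ⟨y, hy, e, he, hze⟩ := Submodule.mem_sup.1 hz
    obtain ⟨a, rfl⟩ := Submodule.mem_span_singleton.1 hy
    have ha : a ≠ 0 := by
      rintro rfl
      apply hw
      rw [← hwz, ← hze, zero_smul, zero_add]
      exact add_mem (mem_sup_left hh) (mem_sup_right he)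
    have hxmem : x ∈ (H ⊔ (K ∙ w)) ⊔ E := by
      have : x = a⁻¹ • (w - h - e) := by
        rw [← hwz, ← hze]
        rw [show h + (a • x + e) - h - e = a • x by abel, smul_smul, inv_mul_cancel₀ ha,
          one_smul]
      rw [this]
      refine smul_mem _ _ (sub_mem (sub_mem ?_ ?_) ?_)
      · exact mem_sup_left (mem_sup_right (mem_span_singleton_self w))
      · exact mem_sup_left (mem_sup_left hh)
      · exact mem_sup_right he
    intro v _
    have : (⊤ : Submodule K V) ≤ (H ⊔ (K ∙ w)) ⊔ E := by
      rw [← htop, ← hEx]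
      refine sup_le (sup_le ?_ ?_) ?_
      · exact le_trans le_sup_left le_sup_left
      · rwa [span_singleton_le_iff_mem]
      · exact le_sup_right
    exact this trivial

open Submodule in
private lemma not_isCompl_of_mem_sup {W H E : Submodule K V} (hHW : H ≤ W) {w : V}
    (hwW : w ∈ W) (hwH : w ∉ H) (hwHE : w ∈ H ⊔ E) : ¬ IsCompl W E := by
  obtain ⟨h, hh, e, he, hhe⟩ := Submodule.mem_sup.1 hwHE
  intro hc
  have heW : e ∈ W := by
    have : e = w - h := by rw [← hhe]; abel
    rw [this]; exact sub_mem hwW (hHW hh)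
  have he0 : e = 0 := by
    have := hc.inf_eq_bot
    have hmem : e ∈ W ⊓ E := ⟨heW, he⟩
    rwa [this, mem_bot] at hmem
  apply hwH
  rw [← hhe, he0, add_zero]; exact hh

open Submodule in
private lemma rank_sup_eq_of_inf_eq_bot {A B : Submodule K V} (h : A ⊓ B = ⊥) :
    Module.rank K ↥(A ⊔ B) = Module.rank K A + Module.rank K B := by
  have hh := Submodule.rank_sup_add_rank_inf_eq A B
  rw [h, rank_bot, add_zero] at hh
  exact hh

open Submodule in
private lemma mem_sup_span_of_rank_two {L : Submodule K V} (hL : Module.rank K L = 2)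
    {v₁ v₂ : V} (h1 : v₁ ∈ L) (h2 : v₂ ∈ L) (hd : (K ∙ v₁) ⊓ (K ∙ v₂) = ⊥)
    (hn1 : v₁ ≠ 0) (hn2 : v₂ ≠ 0) {u : V} (hu : u ∈ L) : u ∈ (K ∙ v₁) ⊔ (K ∙ v₂) := by
  by_contra hus
  have hu0 : u ≠ 0 := fun h => hus (h ▸ zero_mem _)
  have hrS : Module.rank K ↥((K ∙ v₁) ⊔ (K ∙ v₂)) = 2 := by
    rw [rank_sup_eq_of_inf_eq_bot hd, rank_span_singleton'' hn1, rank_span_singleton'' hn2,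
      one_add_one_eq_two]
  have hSu : ((K ∙ v₁) ⊔ (K ∙ v₂)) ⊓ (K ∙ u) = ⊥ := by
    rw [eq_bot_iff]
    rintro z ⟨hz1, hz2⟩
    obtain ⟨a, rfl⟩ := Submodule.mem_span_singleton.1 hz2
    by_cases ha : a = 0
    · rw [ha, zero_smul]; exact zero_mem _
    · exfalso; apply hus
      have : u = a⁻¹ • (a • u) := by rw [smul_smul, inv_mul_cancel₀ ha, one_smul]
      rw [this]; exact smul_mem _ _ hz1
  have h3 : Module.rank K ↥(((K ∙ v₁) ⊔ (K ∙ v₂)) ⊔ (K ∙ u)) = 3 := by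
    rw [rank_sup_eq_of_inf_eq_bot hSu, hrS, rank_span_singleton'' hu0]
    norm_num
  have hle : ((K ∙ v₁) ⊔ (K ∙ v₂)) ⊔ (K ∙ u) ≤ L :=
    sup_le (sup_le ((span_singleton_le_iff_mem _ _).2 h1) ((span_singleton_le_iff_mem _ _).2 h2))
      ((span_singleton_le_iff_mem _ _).2 hu)
  have := Submodule.rank_mono (R := K) hle
  rw [h3, hL] at this
  norm_num at this

/-- Core of the proof of Theorem 4.11. The partial `Z`-reguli are
precisely the subsets of `𝒢` satisfying (⊠1) and (⊠2). -/
theorem partialZRegulus_iff_box (hV : 2 < Module.rank K V)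
    (R : Set (Submodule K V)) :
    IsPartialZRegulus R ↔ ((IsDistantClique R ∧ HasThree R) ∧ BoxTwo R) := by
  constructor
  · rintro ⟨⟨hclique, h3⟩, hR2⟩
    refine ⟨⟨hclique, h3⟩, ?_⟩
    intro E₀ hE₀ E₁ hE₁ E₂ hE₂ h01 h02 h12 W hWG hadj hnd1 hnd2 E hER
    have hc01 : IsCompl E₀ E₁ := hclique.2 hE₀ hE₁ h01
    have hc02 : IsCompl E₀ E₂ := hclique.2 hE₀ hE₂ h02
    have hc12 : IsCompl E₁ E₂ := hclique.2 hE₁ hE₂ h12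
    obtain ⟨hq1, hq2⟩ := hadj
    obtain ⟨w, hwW, hwH⟩ := exists_of_quotRank_one hq1
    have hwE₀ : w ∉ E₀ := fun h => hwH ⟨hwW, h⟩
    have hWeq : (W ⊓ E₀) ⊔ (K ∙ w) = W := quotRank_one_sup inf_le_left hq1 hwW hwH
    have hHE₀ : W ⊓ E₀ ≤ E₀ := inf_le_right
    have hw1 : w ∈ (W ⊓ E₀) ⊔ E₁ := by
      by_contra hcon
      exact hnd1 (hWeq ▸ isCompl_of_notMem hc01 hHE₀ hq2 hcon)
    have hw2 : w ∈ (W ⊓ E₀) ⊔ E₂ := by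
      by_contra hcon
      exact hnd2 (hWeq ▸ isCompl_of_notMem hc02 hHE₀ hq2 hcon)
    obtain ⟨h₁, hh₁, e₁, he₁, hwd1⟩ := Submodule.mem_sup.1 hw1
    obtain ⟨h₂, hh₂, e₂, he₂, hwd2⟩ := Submodule.mem_sup.1 hw2
    have he₁0 : e₁ ≠ 0 := by
      rintro rfl; rw [add_zero] at hwd1; exact hwH (hwd1 ▸ hh₁)
    have he₂0 : e₂ ≠ 0 := by
      rintro rfl; rw [add_zero] at hwd2; exact hwH (hwd2 ▸ hh₂)
    have heq12 : h₁ + e₁ = h₂ + e₂ := hwd1.trans hwd2.symm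
    have hdmem : e₁ - e₂ ∈ W ⊓ E₀ := by
      have h5 : e₁ - e₂ = h₂ - h₁ := by
        rw [sub_eq_sub_iff_add_eq_add, add_comm e₁ h₁]
        exact heq12
      rw [h5]
      exact sub_mem hh₂ hh₁
    have hd0 : e₁ - e₂ ≠ 0 := by
      intro h0
      have h5 : e₁ = e₂ := sub_eq_zero.1 h0
      have h6 : e₁ ∈ E₁ ⊓ E₂ := ⟨he₁, h5 ▸ he₂⟩
      rw [hc12.inf_eq_bot, Submodule.mem_bot] at h6
      exact he₁0 h6
    have hsp : (K ∙ e₁) ⊓ (K ∙ e₂) = ⊥ := by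
      rw [eq_bot_iff]
      rintro z ⟨hz1, hz2⟩
      have hzz : z ∈ E₁ ⊓ E₂ :=
        ⟨(Submodule.span_singleton_le_iff_mem e₁ E₁).2 he₁ hz1,
          (Submodule.span_singleton_le_iff_mem e₂ E₂).2 he₂ hz2⟩
      rwa [hc12.inf_eq_bot] at hzz
    have hLine : IsLine ((K ∙ e₁) ⊔ (K ∙ e₂)) := by
      show Module.rank K _ = 2
      rw [rank_sup_eq_of_inf_eq_bot hsp, rank_span_singleton'' he₁0, rank_span_singleton'' he₂0,
        one_add_one_eq_two]
    have hm0 : Meets ((K ∙ e₁) ⊔ (K ∙ e₂)) E₀ :=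
      (Submodule.ne_bot_iff _).2
        ⟨e₁ - e₂, ⟨sub_mem (Submodule.mem_sup_left (Submodule.mem_span_singleton_self e₁))
          (Submodule.mem_sup_right (Submodule.mem_span_singleton_self e₂)), hHE₀ hdmem⟩, hd0⟩
    have hm1 : Meets ((K ∙ e₁) ⊔ (K ∙ e₂)) E₁ :=
      (Submodule.ne_bot_iff _).2
        ⟨e₁, ⟨Submodule.mem_sup_left (Submodule.mem_span_singleton_self e₁), he₁⟩, he₁0⟩
    have hm2 : Meets ((K ∙ e₁) ⊔ (K ∙ e₂)) E₂ :=
      (Submodule.ne_bot_iff _).2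
        ⟨e₂, ⟨Submodule.mem_sup_right (Submodule.mem_span_singleton_self e₂), he₂⟩, he₂0⟩
    have hmeet := hR2 _ hLine E₀ hE₀ E₁ hE₁ E₂ hE₂ h01 h02 h12 hm0 hm1 hm2 E hER
    by_cases hEE₀ : E = E₀
    · subst hEE₀
      intro hcWE
      have hcompl : IsCompl W E := hcWE
      have hHbot : W ⊓ E = ⊥ := hcompl.inf_eq_bot
      have h1' : quotRank (⊥ : Submodule K V) E = 1 := by rw [← hHbot]; exact hq2
      rw [quotRank_bot'] at h1'
      obtain ⟨eqv⟩ := hclique.1 hER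
      have hrV : Module.rank K V = 2 := by
        rw [← Submodule.rank_quotient_add_rank E, ← eqv.rank_eq, h1', one_add_one_eq_two]
      rw [hrV] at hV
      exact lt_irrefl _ hV
    · have hcE : IsCompl E₀ E := hclique.2 hE₀ hER (fun h => hEE₀ h.symm)
      obtain ⟨u, hu, hu0⟩ := (Submodule.ne_bot_iff _).1 hmeet
      obtain ⟨huL, huE⟩ := hu
      obtain ⟨y₁, hy₁, y₂, hy₂, hy⟩ := Submodule.mem_sup.1 huL
      obtain ⟨α, rfl⟩ := Submodule.mem_span_singleton.1 hy₁
      obtain ⟨β, rfl⟩ := Submodule.mem_span_singleton.1 hy₂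
      by_cases hab : α + β = 0
      · exfalso
        have hβ : β = -α := eq_neg_of_add_eq_zero_right hab
        have huH : u ∈ W ⊓ E₀ := by
          have h7 : u = α • (e₁ - e₂) := by
            rw [← hy, hβ, smul_sub, neg_smul, ← sub_eq_add_neg]
          rw [h7]
          exact Submodule.smul_mem _ _ hdmem
        have h8 : u ∈ E₀ ⊓ E := ⟨hHE₀ huH, huE⟩
        rw [hcE.inf_eq_bot, Submodule.mem_bot] at h8
        exact hu0 h8
      · have he₂mem : e₂ ∈ (W ⊓ E₀) ⊔ E := by
          have hcomp : (α + β) • e₂ = u - α • (e₁ - e₂) := by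
            rw [← hy, smul_sub, add_smul]; abel
          have h9 : e₂ = (α + β)⁻¹ • (u - α • (e₁ - e₂)) := by
            rw [← hcomp, smul_smul, inv_mul_cancel₀ hab, one_smul]
          rw [h9]
          exact Submodule.smul_mem _ _ (sub_mem (Submodule.mem_sup_right huE)
            (Submodule.mem_sup_left (Submodule.smul_mem _ _ hdmem)))
        have hwmem : w ∈ (W ⊓ E₀) ⊔ E := by
          rw [← hwd2]
          exact add_mem (Submodule.mem_sup_left hh₂) he₂mem
        exact not_isCompl_of_mem_sup inf_le_left hwW hwH hwmem
  · rintro ⟨⟨hclique, h3⟩, hbox⟩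
    refine ⟨⟨hclique, h3⟩, ?_⟩
    intro L hL E₀ hE₀ E₁ hE₁ E₂ hE₂ h01 h02 h12 hm0 hm1 hm2 E hER
    by_cases hE0 : E = E₀
    · exact hE0 ▸ hm0
    by_cases hE1 : E = E₁
    · exact hE1 ▸ hm1
    by_cases hE2 : E = E₂
    · exact hE2 ▸ hm2
    have hc01 : IsCompl E₀ E₁ := hclique.2 hE₀ hE₁ h01
    have hc02 : IsCompl E₀ E₂ := hclique.2 hE₀ hE₂ h02
    have hc12 : IsCompl E₁ E₂ := hclique.2 hE₁ hE₂ h12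
    have hcE0 : IsCompl E₀ E := hclique.2 hE₀ hER (fun h => hE0 h.symm)
    obtain ⟨v₀, hv₀m, hv₀0⟩ := (Submodule.ne_bot_iff _).1 hm0
    obtain ⟨v₁, hv₁m, hv₁0⟩ := (Submodule.ne_bot_iff _).1 hm1
    obtain ⟨v₂, hv₂m, hv₂0⟩ := (Submodule.ne_bot_iff _).1 hm2
    obtain ⟨hv₀L, hv₀E₀⟩ := hv₀m
    obtain ⟨hv₁L, hv₁E₁⟩ := hv₁m
    obtain ⟨hv₂L, hv₂E₂⟩ := hv₂m
    have hsp12 : (K ∙ v₁) ⊓ (K ∙ v₂) = ⊥ := by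
      rw [eq_bot_iff]
      rintro z ⟨hz1, hz2⟩
      have hzz : z ∈ E₁ ⊓ E₂ :=
        ⟨(Submodule.span_singleton_le_iff_mem v₁ E₁).2 hv₁E₁ hz1,
          (Submodule.span_singleton_le_iff_mem v₂ E₂).2 hv₂E₂ hz2⟩
      rwa [hc12.inf_eq_bot] at hzz
    have hv₀mem : v₀ ∈ (K ∙ v₁) ⊔ (K ∙ v₂) :=
      mem_sup_span_of_rank_two hL hv₁L hv₂L hsp12 hv₁0 hv₂0 hv₀L
    obtain ⟨y₁, hy₁, y₂, hy₂, hy⟩ := Submodule.mem_sup.1 hv₀mem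
    obtain ⟨α, rfl⟩ := Submodule.mem_span_singleton.1 hy₁
    obtain ⟨β, rfl⟩ := Submodule.mem_span_singleton.1 hy₂
    have hα : α ≠ 0 := by
      rintro rfl
      rw [zero_smul, zero_add] at hy
      have h6 : v₀ ∈ E₀ ⊓ E₂ := ⟨hv₀E₀, hy ▸ Submodule.smul_mem _ _ hv₂E₂⟩
      rw [hc02.inf_eq_bot, Submodule.mem_bot] at h6
      exact hv₀0 h6
    have hβ : β ≠ 0 := by
      rintro rfl
      rw [zero_smul, add_zero] at hy
      have h6 : v₀ ∈ E₀ ⊓ E₁ := ⟨hv₀E₀, hy ▸ Submodule.smul_mem _ _ hv₁E₁⟩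
      rw [hc01.inf_eq_bot, Submodule.mem_bot] at h6
      exact hv₀0 h6
    set e₁ : V := α • v₁ with he₁def
    set e₂ : V := (-β) • v₂ with he₂def
    have he₁E₁ : e₁ ∈ E₁ := Submodule.smul_mem _ _ hv₁E₁
    have he₂E₂ : e₂ ∈ E₂ := Submodule.smul_mem _ _ hv₂E₂
    have he₁0 : e₁ ≠ 0 := by
      rw [he₁def]; exact smul_ne_zero hα hv₁0
    have he₂0 : e₂ ≠ 0 := by
      rw [he₂def]; exact smul_ne_zero (neg_ne_zero.2 hβ) hv₂0
    have hde : e₁ - e₂ = v₀ := by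
      rw [he₁def, he₂def, neg_smul, sub_neg_eq_add]; exact hy
    have he₁L : e₁ ∈ L := Submodule.smul_mem _ _ hv₁L
    have he₂L : e₂ ∈ L := Submodule.smul_mem _ _ hv₂L
    have hsp : (K ∙ e₁) ⊓ (K ∙ e₂) = ⊥ := by
      rw [he₁def, he₂def, Submodule.span_singleton_smul_eq (IsUnit.mk0 α hα) v₁,
        Submodule.span_singleton_smul_eq (IsUnit.mk0 (-β) (neg_ne_zero.2 hβ)) v₂]
      exact hsp12
    have he₁top : e₁ ∈ E₀ ⊔ E := by rw [hcE0.sup_eq_top]; trivial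
    obtain ⟨x, hxE₀, e, heE, hxe⟩ := Submodule.mem_sup.1 he₁top
    by_cases hxd : x ∈ (K ∙ v₀)
    · obtain ⟨lam, hlam⟩ := Submodule.mem_span_singleton.1 hxd
      have heL : e ∈ L := by
        have h7 : e = e₁ - lam • v₀ := by rw [hlam, ← hxe]; abel
        rw [h7]
        exact sub_mem he₁L (Submodule.smul_mem _ _ hv₀L)
      have he0 : e ≠ 0 := by
        intro h0
        have hx' : x = e₁ := by rw [← hxe, h0, add_zero]
        have hfact : lam • e₁ - lam • e₂ = e₁ := by
          rw [← smul_sub, hde, hlam]; exact hx'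
        have h9 : (1 - lam) • e₁ + lam • e₂ = 0 := by
          have h9a : (1 - lam) • e₁ + lam • e₂ = e₁ - (lam • e₁ - lam • e₂) := by
            rw [sub_smul, one_smul]; abel
          rw [h9a, hfact, sub_self]
        have h9' : (1 - lam) • e₁ = -(lam • e₂) := eq_neg_of_add_eq_zero_left h9
        have h10 : (1 - lam) • e₁ ∈ (K ∙ e₁) ⊓ (K ∙ e₂) := by
          constructor
          · exact Submodule.smul_mem _ _ (Submodule.mem_span_singleton_self e₁)
          · rw [h9']
            exact neg_mem (Submodule.smul_mem _ _ (Submodule.mem_span_singleton_self e₂))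
        rw [hsp, Submodule.mem_bot] at h10
        have h11 : lam = 1 := by
          rcases smul_eq_zero.1 h10 with h | h
          · exact (sub_eq_zero.1 h).symm
          · exact absurd h he₁0
        have h12 : lam • e₂ = 0 := by
          rw [h10] at h9'
          exact neg_eq_zero.1 h9'.symm
        rw [h11, one_smul] at h12
        exact he₂0 h12
      exact (Submodule.ne_bot_iff _).2 ⟨e, ⟨heL, heE⟩, he0⟩
    · obtain ⟨H, hHE₀, hdH, hxH, hHx, hqH⟩ := exists_hyperplane hv₀E₀ hxE₀ hxd
      have he₁E₀ : e₁ ∉ E₀ := by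
        intro h7
        have h8 : e₁ ∈ E₀ ⊓ E₁ := ⟨h7, he₁E₁⟩
        rw [hc01.inf_eq_bot, Submodule.mem_bot] at h8
        exact he₁0 h8
      have he₁H : e₁ ∉ H := fun h => he₁E₀ (hHE₀ h)
      have hWE₀ : (H ⊔ (K ∙ e₁)) ⊓ E₀ = H := by
        refine le_antisymm ?_ (le_inf le_sup_left hHE₀)
        rintro u ⟨huW, huE₀⟩
        obtain ⟨h, hh, y, hyy, huy⟩ := Submodule.mem_sup.1 huW
        obtain ⟨a, rfl⟩ := Submodule.mem_span_singleton.1 hyy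
        by_cases ha : a = 0
        · rw [← huy, ha, zero_smul, add_zero]; exact hh
        · exfalso
          apply he₁E₀
          have h7 : a • e₁ = u - h := by rw [← huy]; abel
          have h8 : a • e₁ ∈ E₀ := by rw [h7]; exact sub_mem huE₀ (hHE₀ hh)
          have h9 : e₁ = a⁻¹ • (a • e₁) := by rw [smul_smul, inv_mul_cancel₀ ha, one_smul]
          rw [h9]
          exact Submodule.smul_mem _ _ h8
      have hadjW : Adjacent (H ⊔ (K ∙ e₁)) E₀ := by
        constructor
        · rw [hWE₀]
          exact quotRank_one_of_sup le_sup_left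
            (Submodule.mem_sup_right (Submodule.mem_span_singleton_self e₁)) he₁H rfl
        · rw [hWE₀]
          exact quotRank_one_of_sup hHE₀ hxE₀ hxH hHx
      have hx0 : x ≠ 0 := fun h => hxd (h ▸ zero_mem _)
      have hWG : (H ⊔ (K ∙ e₁)) ∈ Grass K V := by
        have he₁leE₁ : (K ∙ e₁) ≤ E₁ := (Submodule.span_singleton_le_iff_mem e₁ E₁).2 he₁E₁
        obtain ⟨C, hCE₁, hCsup, hCinf⟩ := exists_relCompl he₁leE₁
        have hrk01 : Module.rank K E₀ = Module.rank K E₁ := by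
          obtain ⟨eqv⟩ := hclique.1 hE₀
          rw [eqv.rank_eq, (Submodule.quotientEquivOfIsCompl E₀ E₁ hc01).rank_eq]
        have hinfHe : H ⊓ (K ∙ e₁) = ⊥ := by
          rw [eq_bot_iff]
          rintro z ⟨hz1, hz2⟩
          have hzz : z ∈ E₀ ⊓ E₁ := ⟨hHE₀ hz1, he₁leE₁ hz2⟩
          rwa [hc01.inf_eq_bot] at hzz
        have hinfHx : H ⊓ (K ∙ x) = ⊥ := by
          rw [eq_bot_iff]
          rintro z ⟨hz1, hz2⟩
          obtain ⟨a, rfl⟩ := Submodule.mem_span_singleton.1 hz2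
          by_cases ha : a = 0
          · rw [ha, zero_smul]; exact zero_mem _
          · exfalso
            apply hxH
            have h9 : x = a⁻¹ • (a • x) := by rw [smul_smul, inv_mul_cancel₀ ha, one_smul]
            rw [h9]
            exact Submodule.smul_mem _ _ hz1
        have hrW : Module.rank K ↥(H ⊔ (K ∙ e₁)) = Module.rank K E₀ := by
          rw [rank_sup_eq_of_inf_eq_bot hinfHe, ← hHx, rank_sup_eq_of_inf_eq_bot hinfHx,
            rank_span_singleton'' he₁0, rank_span_singleton'' hx0]
        have hinfxC : (K ∙ x) ⊓ C = ⊥ := by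
          rw [eq_bot_iff]
          rintro z ⟨hz1, hz2⟩
          have hzz : z ∈ E₀ ⊓ E₁ :=
            ⟨(Submodule.span_singleton_le_iff_mem x E₀).2 hxE₀ hz1, hCE₁ hz2⟩
          rwa [hc01.inf_eq_bot] at hzz
        have hrD : Module.rank K ↥((K ∙ x) ⊔ C) = Module.rank K E₁ := by
          rw [rank_sup_eq_of_inf_eq_bot hinfxC, ← hCsup, rank_sup_eq_of_inf_eq_bot hCinf,
            rank_span_singleton'' hx0, rank_span_singleton'' he₁0]
        have hcWD : IsCompl (H ⊔ (K ∙ e₁)) ((K ∙ x) ⊔ C) := by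
          constructor
          · rw [disjoint_iff, eq_bot_iff]
            rintro u ⟨huW, huD⟩
            obtain ⟨h, hh, y, hyy, huy⟩ := Submodule.mem_sup.1 huW
            obtain ⟨a, rfl⟩ := Submodule.mem_span_singleton.1 hyy
            obtain ⟨y', hyy', c, hc, huy'⟩ := Submodule.mem_sup.1 huD
            obtain ⟨b, rfl⟩ := Submodule.mem_span_singleton.1 hyy'
            have hz : h - b • x = c - a • e₁ := by
              rw [sub_eq_sub_iff_add_eq_add, add_comm c (b • x)]
              exact huy.trans huy'.symm
            have hz0 : h - b • x = 0 := by
              have hmem : h - b • x ∈ E₀ ⊓ E₁ := by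
                constructor
                · exact sub_mem (hHE₀ hh) (Submodule.smul_mem _ _ hxE₀)
                · rw [hz]; exact sub_mem (hCE₁ hc) (Submodule.smul_mem _ _ he₁E₁)
              rwa [hc01.inf_eq_bot, Submodule.mem_bot] at hmem
            have hc0 : c = a • e₁ := by
              rw [hz0] at hz
              exact (sub_eq_zero.1 hz.symm)
            have hae0 : a • e₁ = 0 := by
              have hmem : a • e₁ ∈ (K ∙ e₁) ⊓ C := by
                refine ⟨Submodule.smul_mem _ _ (Submodule.mem_span_singleton_self e₁), ?_⟩
                rw [← hc0]; exact hc
              rwa [hCinf, Submodule.mem_bot] at hmem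
            have hbx0 : h = b • x := sub_eq_zero.1 hz0
            have hbx00 : b • x = 0 := by
              have hmem : b • x ∈ H ⊓ (K ∙ x) :=
                ⟨hbx0 ▸ hh, Submodule.smul_mem _ _ (Submodule.mem_span_singleton_self x)⟩
              rwa [hinfHx, Submodule.mem_bot] at hmem
            rw [Submodule.mem_bot, ← huy, hae0, add_zero, hbx0, hbx00]
          · rw [codisjoint_iff]
            have h9 : (H ⊔ (K ∙ e₁)) ⊔ ((K ∙ x) ⊔ C) = (H ⊔ (K ∙ x)) ⊔ ((K ∙ e₁) ⊔ C) :=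
              sup_sup_sup_comm _ _ _ _
            rw [h9, hHx, hCsup, hc01.sup_eq_top]
        have hrkeq : Module.rank K ↥(H ⊔ (K ∙ e₁))
            = Module.rank K (V ⧸ (H ⊔ (K ∙ e₁))) := by
          rw [(Submodule.quotientEquivOfIsCompl _ _ hcWD).rank_eq, hrW, hrD, hrk01]
        exact LinearEquiv.nonempty_equiv_iff_rank_eq.2 hrkeq
      have hnd1 : ¬ Distant (H ⊔ (K ∙ e₁)) E₁ := by
        intro hc
        have hcc : IsCompl (H ⊔ (K ∙ e₁)) E₁ := hc
        have hmem : e₁ ∈ (H ⊔ (K ∙ e₁)) ⊓ E₁ :=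
          ⟨Submodule.mem_sup_right (Submodule.mem_span_singleton_self e₁), he₁E₁⟩
        rw [hcc.inf_eq_bot, Submodule.mem_bot] at hmem
        exact he₁0 hmem
      have hnd2 : ¬ Distant (H ⊔ (K ∙ e₁)) E₂ := by
        intro hc
        have hcc : IsCompl (H ⊔ (K ∙ e₁)) E₂ := hc
        have he₂W : e₂ ∈ H ⊔ (K ∙ e₁) := by
          have h7 : e₂ = e₁ - v₀ := by rw [← hde]; abel
          rw [h7]
          exact sub_mem (Submodule.mem_sup_right (Submodule.mem_span_singleton_self e₁))
            (Submodule.mem_sup_left hdH)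
        have hmem : e₂ ∈ (H ⊔ (K ∙ e₁)) ⊓ E₂ := ⟨he₂W, he₂E₂⟩
        rw [hcc.inf_eq_bot, Submodule.mem_bot] at hmem
        exact he₂0 hmem
      have hndE := hbox E₀ hE₀ E₁ hE₁ E₂ hE₂ h01 h02 h12 _ hWG hadjW hnd1 hnd2 E hER
      have he₁HE : e₁ ∈ H ⊔ E := by
        by_contra hcon
        exact hndE (isCompl_of_notMem hcE0 hHE₀ hqH hcon)
      exfalso
      obtain ⟨h, hh, e', he', hhe⟩ := Submodule.mem_sup.1 he₁HE
      have hxh : x - h = e' - e := by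
        rw [sub_eq_sub_iff_add_eq_add, add_comm e' h]
        exact hxe.trans hhe.symm
      have hmem : x - h ∈ E₀ ⊓ E := ⟨sub_mem hxE₀ (hHE₀ hh), hxh ▸ sub_mem he' heE⟩
      rw [hcE0.inf_eq_bot, Submodule.mem_bot, sub_eq_zero] at hmem
      exact hxH (hmem.symm ▸ hh)
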